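/- arXiv:math/0307116 — 3 statements merged into one kernel-verified Lean document; each statement's English description precedes it below -/
import Mathlib

section
/- Let g ∈ SL(2,ℂ) with g₁₁ ≠ 0, and let v(g) be the lower unipotent matrix with rows (1,0) and (g₂₁/g₁₁, 1) (the N⁻-component of the Gauss decomposition of g). Then the (1,1) entry u(g)₁₁ of the unitary Iwasawa factor of g satisfies |u(g)₁₁| = (b(v(g))₁₁)⁻¹, where b(v(g))₁₁ > 0 is the (1,1) entry of the Iwasawa B-factor of v(g). In other words, the modulus of the torus component of the Gauss decomposition of u(g) equals the inverse of the torus component of the Iwasawa decomposition of v(g). -/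
/-- Membership in `SU(2)`: determinant one and unitary. -/
def IsSU2 (u : Matrix (Fin 2) (Fin 2) ℂ) : Prop :=
  u.det = 1 ∧ u.conjTranspose * u = 1

/-- Upper triangular element of `SL(2,ℂ)` with positive real diagonal entries
(the `B`-factor of the Iwasawa decomposition `G = UB`). -/
def IsPosUpper (b : Matrix (Fin 2) (Fin 2) ℂ) : Prop :=
  b.det = 1 ∧ b 1 0 = 0 ∧ (b 0 0).im = 0 ∧ 0 < (b 0 0).re ∧
    (b 1 1).im = 0 ∧ 0 < (b 1 1).re

/-- Lemma 2.2: if `g ∈ SL(2,ℂ)` has `g₁₁ ≠ 0`, `g = u·b` is its Iwasawa decomposition,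
`v(g) = [[1,0],[g₂₁/g₁₁,1]]` is the `N⁻`-factor of its Gauss decomposition, and
`v(g) = u'·b'` is the Iwasawa decomposition of `v(g)`, then
`|u(g)₁₁| = (b(v(g))₁₁)⁻¹`. -/
theorem gauss_iwasawa_torus_relation
    (g u b u' b' : Matrix (Fin 2) (Fin 2) ℂ)
    (hg : g.det = 1) (hg11 : g 0 0 ≠ 0)
    (hu : IsSU2 u) (hb : IsPosUpper b) (hgub : g = u * b)
    (hu' : IsSU2 u') (hb' : IsPosUpper b')
    (hvub : !![1, 0; g 1 0 / g 0 0, 1] = u' * b') :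
    ‖u 0 0‖ = ((b' 0 0).re)⁻¹ := by
  obtain ⟨hud, huU⟩ := hu
  obtain ⟨hu'd, hu'U⟩ := hu'
  obtain ⟨hb1, hb10, hbim, hbre, hb3, hb4⟩ := hb
  obtain ⟨hb'1, hb'10, hb'im, hb're, hb'3, hb'4⟩ := hb'
  have hg00 : g 0 0 = u 0 0 * b 0 0 := by
    rw [hgub]; simp [Matrix.mul_apply, Fin.sum_univ_two, hb10]
  have hg10 : g 1 0 = u 1 0 * b 0 0 := by
    rw [hgub]; simp [Matrix.mul_apply, Fin.sum_univ_two, hb10]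
  have h1 : (1:ℂ) = u' 0 0 * b' 0 0 := by
    have h := congrFun (congrFun hvub 0) 0
    simpa [Matrix.mul_apply, Fin.sum_univ_two, hb'10] using h
  have h2 : g 1 0 / g 0 0 = u' 1 0 * b' 0 0 := by
    have h := congrFun (congrFun hvub 1) 0
    simpa [Matrix.mul_apply, Fin.sum_univ_two, hb'10] using h
  have hun : Complex.normSq (u 0 0) + Complex.normSq (u 1 0) = 1 := by
    have h := congrFun (congrFun huU 0) 0
    simp [Matrix.mul_apply, Matrix.conjTranspose_apply, Fin.sum_univ_two,
      Matrix.one_apply] at h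
    have h2 := congrArg Complex.re h
    simpa [Complex.normSq_apply, Complex.mul_re] using h2
  have hun' : Complex.normSq (u' 0 0) + Complex.normSq (u' 1 0) = 1 := by
    have h := congrFun (congrFun hu'U 0) 0
    simp [Matrix.mul_apply, Matrix.conjTranspose_apply, Fin.sum_univ_two,
      Matrix.one_apply] at h
    have h2 := congrArg Complex.re h
    simpa [Complex.normSq_apply, Complex.mul_re] using h2
  set r := (b' 0 0).re with hr
  have hb'eq : b' 0 0 = (r:ℂ) := Complex.ext rfl (by simpa using hb'im)
  have hnb' : Complex.normSq (b' 0 0) = r^2 := by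
    rw [hb'eq]; simp [Complex.normSq_apply, sq]
  have e1 : Complex.normSq (u' 0 0) * r^2 = 1 := by
    have h := congrArg Complex.normSq h1
    simpa [map_mul, hnb'] using h.symm
  have hu00 : u 0 0 ≠ 0 := fun h => hg11 (by rw [hg00, h, zero_mul])
  have hb00 : b 0 0 ≠ 0 := fun h => by simp [h] at hbre
  have hB : Complex.normSq (b 0 0) ≠ 0 := fun h => hb00 (Complex.normSq_eq_zero.1 h)
  have hnsg : Complex.normSq (g 1 0 / g 0 0)
      = Complex.normSq (u 1 0) / Complex.normSq (u 0 0) := by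
    rw [map_div₀, hg00, hg10, map_mul, map_mul, mul_div_mul_right _ _ hB]
  have e2 : Complex.normSq (u' 1 0) * r^2
      = Complex.normSq (u 1 0) / Complex.normSq (u 0 0) := by
    have h := congrArg Complex.normSq h2
    simpa [map_mul, hnb', hnsg] using h.symm
  have ha : 0 < Complex.normSq (u 0 0) := Complex.normSq_pos.2 hu00
  have e2' : Complex.normSq (u' 1 0) * r^2 * Complex.normSq (u 0 0)
      = Complex.normSq (u 1 0) := by
    field_simp at e2; linarith [e2]
  have key : Complex.normSq (u 0 0) * r^2 = 1 := by
    linear_combination Complex.normSq (u 0 0) * e1 + e2' + hun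
      - (Complex.normSq (u 0 0) * r^2) * hun'
  have hrpos : (0:ℝ) < r := hb're
  have hsq : (‖u 0 0‖)^2 = (r⁻¹)^2 := by
    rw [Complex.sq_norm]
    field_simp
    linarith [key]
  have h1' : (0:ℝ) ≤ ‖u 0 0‖ := norm_nonneg _
  have h2' : (0:ℝ) ≤ r⁻¹ := le_of_lt (inv_pos.2 hrpos)
  calc ‖u 0 0‖ = Real.sqrt ((‖u 0 0‖)^2) := (Real.sqrt_sq h1').symm
    _ = Real.sqrt ((r⁻¹)^2) := by rw [hsq]
    _ = r⁻¹ := Real.sqrt_sq h2'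
end

section
/- For every τ ∈ ℝ^ℓ, writing τ̃ := Φ⁻¹(τ), the action variables satisfy the recursion J_j(τ) = 𝒥(τ̃_j) · ( l_j − Σ_{i<j} c_{ji} J_i(τ) ) for every j = 1, …, ℓ; in particular J₁(τ) = l₁·𝒥(τ̃₁). -/
open Real Finset

noncomputable section

/-- `K(t) = log(1 + e^{2t})`. -/
def Kfun (t : ℝ) : ℝ := Real.log (1 + Real.exp (2 * t))

/-- `𝒥(t) = e^{2t}/(1 + e^{2t})`. -/
def Jfun (t : ℝ) : ℝ := Real.exp (2 * t) / (1 + Real.exp (2 * t))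

/-- The coordinate change `Φ(σ)_i = σ_i + (1/2)·Σ_{j>i} c_{ji} K(σ_j)`. -/
def Phi {ℓ : ℕ} (c : Fin ℓ → Fin ℓ → ℤ) (σ : Fin ℓ → ℝ) : Fin ℓ → ℝ :=
  fun i => σ i + (1 / 2) * ∑ j ∈ Finset.univ.filter (fun j => i < j), (c j i : ℝ) * Kfun (σ j)

/-- The inverse of the coordinate change `Φ`. -/
def PhiInv {ℓ : ℕ} (c : Fin ℓ → Fin ℓ → ℤ) : (Fin ℓ → ℝ) → (Fin ℓ → ℝ) :=
  Function.invFun (Phi c)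

/-- The Kähler potential `K_λ(τ) = Σ_i l_i K(τ̃_i)`, where `τ̃ = Φ⁻¹(τ)`. -/
def Klam {ℓ : ℕ} (l : Fin ℓ → ℤ) (c : Fin ℓ → Fin ℓ → ℤ) (τ : Fin ℓ → ℝ) : ℝ :=
  ∑ i, (l i : ℝ) * Kfun (PhiInv c τ i)

/-- The action variables `J_j(τ) = (1/2)·∂K_λ/∂τ_j`. -/
def Jact {ℓ : ℕ} (l : Fin ℓ → ℤ) (c : Fin ℓ → Fin ℓ → ℤ) (j : Fin ℓ) (τ : Fin ℓ → ℝ) : ℝ :=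
  (1 / 2) * fderiv ℝ (Klam l c) τ (Pi.single j 1)

/-- `L_j(τ) = Σ_{i<j} c_{ji} J_i(τ)`. -/
def Lfun {ℓ : ℕ} (l : Fin ℓ → ℤ) (c : Fin ℓ → Fin ℓ → ℤ) (j : Fin ℓ) (τ : Fin ℓ → ℝ) : ℝ :=
  ∑ i ∈ Finset.univ.filter (fun i => i < j), (c j i : ℝ) * Jact l c i τ

def Ginv {ℓ : ℕ} (c : Fin ℓ → Fin ℓ → ℤ) (τ : Fin ℓ → ℝ) (i : Fin ℓ) : ℝ :=
  τ i - (1 / 2) * ∑ j ∈ (Finset.univ.filter (fun j => i < j)).attach,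
      (c j.1 i : ℝ) * Kfun (Ginv c τ j.1)
termination_by ℓ - i.val
decreasing_by
  have hj := (Finset.mem_filter.mp j.2).2
  have := j.1.isLt
  simp only [Fin.lt_def] at hj
  omega
lemma Ginv_eq {ℓ : ℕ} (c : Fin ℓ → Fin ℓ → ℤ) (τ : Fin ℓ → ℝ) (i : Fin ℓ) :
    Ginv c τ i = τ i - (1 / 2) * ∑ j ∈ Finset.univ.filter (fun j => i < j),
      (c j i : ℝ) * Kfun (Ginv c τ j) := by
  rw [Ginv, ← Finset.sum_attach (Finset.univ.filter (fun j => i < j))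
    (fun j => (c j i : ℝ) * Kfun (Ginv c τ j))]

lemma hasDerivAt_Kfun (t : ℝ) : HasDerivAt Kfun (2 * Jfun t) t := by
  have h1 : HasDerivAt (fun s : ℝ => 2 * s) 2 t := by
    simpa using (hasDerivAt_id t).const_mul (2:ℝ)
  have h2 : HasDerivAt (fun s : ℝ => Real.exp (2 * s)) (Real.exp (2 * t) * 2) t :=
    (Real.hasDerivAt_exp _).comp t h1
  have h3 : HasDerivAt (fun s : ℝ => 1 + Real.exp (2 * s)) (Real.exp (2 * t) * 2) t :=
    h2.const_add 1
  have hpos : (0:ℝ) < 1 + Real.exp (2 * t) := by positivity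
  have := h3.log (ne_of_gt hpos)
  convert this using 1
  · rfl
  · unfold Jfun; field_simp

lemma diff_Ginv {ℓ : ℕ} (c : Fin ℓ → Fin ℓ → ℤ) (i : Fin ℓ) :
    Differentiable ℝ (fun τ => Ginv c τ i) := by
  have key : ∀ n : ℕ, ∀ i : Fin ℓ, ℓ - i.val ≤ n → Differentiable ℝ (fun τ => Ginv c τ i) := by
    intro n
    induction n with
    | zero => intro i h; have := i.isLt; omega
    | succ n IH =>
      intro i _
      have heq : (fun τ => Ginv c τ i) = fun τ => τ i - (1 / 2) *
          ∑ j ∈ Finset.univ.filter (fun j => i < j), (c j i : ℝ) * Kfun (Ginv c τ j) :=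
        funext fun τ => Ginv_eq c τ i
      rw [heq]
      apply Differentiable.sub
      · exact fun τ => (hasFDerivAt_apply i τ).differentiableAt
      · apply Differentiable.const_mul
        apply Differentiable.fun_sum
        intro j hj
        have hj' := (Finset.mem_filter.mp hj).2
        simp only [Fin.lt_def] at hj'
        have hd : Differentiable ℝ (fun τ => Ginv c τ j) := IH j (by omega)
        have hK : Differentiable ℝ Kfun := fun t => (hasDerivAt_Kfun t).differentiableAt
        exact (hK.comp hd).const_mul _
  exact key (ℓ - i.val) i le_rfl

lemma Phi_Ginv {ℓ : ℕ} (c : Fin ℓ → Fin ℓ → ℤ) (τ : Fin ℓ → ℝ) :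
    Phi c (Ginv c τ) = τ := by
  funext i
  simp only [Phi]
  rw [Ginv_eq]
  ring

lemma Ginv_Phi {ℓ : ℕ} (c : Fin ℓ → Fin ℓ → ℤ) (σ : Fin ℓ → ℝ) :
    Ginv c (Phi c σ) = σ := by
  have key : ∀ n : ℕ, ∀ i : Fin ℓ, ℓ - i.val ≤ n → Ginv c (Phi c σ) i = σ i := by
    intro n
    induction n with
    | zero => intro i h; have := i.isLt; omega
    | succ n IH =>
      intro i _
      rw [Ginv_eq, Phi]
      have hs : ∀ j ∈ Finset.univ.filter (fun j => i < j),
          (c j i : ℝ) * Kfun (Ginv c (Phi c σ) j) = (c j i : ℝ) * Kfun (σ j) := by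
        intro j hj
        have hj' := (Finset.mem_filter.mp hj).2
        simp only [Fin.lt_def] at hj'
        rw [IH j (by omega)]
      rw [Finset.sum_congr rfl hs]
      ring
  funext i
  exact key (ℓ - i.val) i le_rfl

lemma PhiInv_eq_Ginv {ℓ : ℕ} (c : Fin ℓ → Fin ℓ → ℤ) :
    PhiInv c = Ginv c := by
  have hinj : Function.Injective (Phi c) :=
    Function.LeftInverse.injective (g := Ginv c) (fun σ => Ginv_Phi c σ)
  funext τ
  have : PhiInv c (Phi c (Ginv c τ)) = Ginv c τ :=
    Function.leftInverse_invFun hinj _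
  rwa [Phi_Ginv] at this

abbrev proj' {ℓ : ℕ} (i : Fin ℓ) : (Fin (ℓ) → ℝ) →L[ℝ] ℝ := ContinuousLinearMap.proj i

lemma hasFDerivAt_F {ℓ : ℕ} (l : Fin ℓ → ℤ) (σ : Fin ℓ → ℝ) :
    HasFDerivAt (fun σ : Fin ℓ → ℝ => ∑ i, (l i : ℝ) * Kfun (σ i))
      (∑ i, (l i : ℝ) • ((2 * Jfun (σ i)) • proj' i)) σ := by
  apply HasFDerivAt.fun_sum
  intro i _
  have h1 : HasFDerivAt (fun σ : Fin ℓ → ℝ => Kfun (σ i)) ((2 * Jfun (σ i)) • proj' i) σ :=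
    (hasDerivAt_Kfun (σ i)).comp_hasFDerivAt (h₂ := Kfun) (f := fun s : Fin ℓ → ℝ => s i) σ (hasFDerivAt_apply i σ)
  exact h1.const_mul _

lemma hasFDerivAt_Phi {ℓ : ℕ} (c : Fin ℓ → Fin ℓ → ℤ) (σ : Fin ℓ → ℝ) :
    HasFDerivAt (Phi c)
      (ContinuousLinearMap.pi (fun i => proj' i + (1 / 2 : ℝ) •
        ∑ j ∈ Finset.univ.filter (fun j => i < j),
          (c j i : ℝ) • ((2 * Jfun (σ j)) • proj' j))) σ := by
  rw [hasFDerivAt_pi']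
  intro i
  rw [ContinuousLinearMap.proj_pi]
  show HasFDerivAt (fun σ : Fin ℓ → ℝ => σ i + (1 / 2) *
    ∑ j ∈ Finset.univ.filter (fun j => i < j), (c j i : ℝ) * Kfun (σ j)) _ σ
  apply HasFDerivAt.add
  · exact hasFDerivAt_apply i σ
  · have hsum : HasFDerivAt
        (fun σ : Fin ℓ → ℝ => ∑ j ∈ Finset.univ.filter (fun j => i < j),
          (c j i : ℝ) * Kfun (σ j))
        (∑ j ∈ Finset.univ.filter (fun j => i < j),
          (c j i : ℝ) • ((2 * Jfun (σ j)) • proj' j)) σ := by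
      apply HasFDerivAt.fun_sum
      intro j _
      exact ((hasDerivAt_Kfun (σ j)).comp_hasFDerivAt (h₂ := Kfun) (f := fun s : Fin ℓ → ℝ => s j) σ (hasFDerivAt_apply j σ)).const_mul _
    exact hsum.const_mul (1 / 2)


/-- Theorem 5.1 (recursion for the action variables): writing `τ̃ = Φ⁻¹(τ)`,
`J_j(τ) = 𝒥(τ̃_j)·(l_j − L_j(τ))` for every `j`; in particular
`J₁(τ) = l₁·𝒥(τ̃₁)`. -/
theorem action_variable_recursion {ℓ : ℕ} (l : Fin ℓ → ℤ) (c : Fin ℓ → Fin ℓ → ℤ)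
    (τ : Fin ℓ → ℝ) :
    (∀ j : Fin ℓ, Jact l c j τ = Jfun (PhiInv c τ j) * ((l j : ℝ) - Lfun l c j τ)) ∧
    (∀ h : 0 < ℓ, Jact l c ⟨0, h⟩ τ = (l ⟨0, h⟩ : ℝ) * Jfun (PhiInv c τ ⟨0, h⟩)) := by
  have hPG := PhiInv_eq_Ginv c
  have main : ∀ j : Fin ℓ, Jact l c j τ = Jfun (PhiInv c τ j) * ((l j : ℝ) - Lfun l c j τ) := by
    intro j
    set σ : Fin ℓ → ℝ := Ginv c τ with hσ
    have hτ : Phi c σ = τ := Phi_Ginv c τ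
    have hKlam : Klam l c = (fun s : Fin ℓ → ℝ => ∑ i, (l i : ℝ) * Kfun (s i)) ∘ (Ginv c) := by
      funext τ'
      simp [Klam, hPG, Function.comp]
    have hKdiff : Differentiable ℝ (Klam l c) := by
      rw [hKlam]
      exact Differentiable.comp (fun s => (hasFDerivAt_F l s).differentiableAt)
        (differentiable_pi.2 (fun i => diff_Ginv c i))
    have hFP : Klam l c ∘ Phi c = fun s : Fin ℓ → ℝ => ∑ i, (l i : ℝ) * Kfun (s i) := by
      funext s
      simp [Klam, hPG, Ginv_Phi, Function.comp]
    have hchain : (fderiv ℝ (Klam l c) τ).comp (fderiv ℝ (Phi c) σ) =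
        (∑ i, (l i : ℝ) • ((2 * Jfun (σ i)) • proj' i)) := by
      rw [← hτ,
        ← fderiv_comp (x := σ) (hKdiff (Phi c σ)) (hasFDerivAt_Phi c σ).differentiableAt,
        hFP, (hasFDerivAt_F l σ).fderiv]
    have hPhifd := (hasFDerivAt_Phi c σ).fderiv
    have hw : (ContinuousLinearMap.pi (fun i => proj' i + (1 / 2 : ℝ) •
        ∑ k ∈ Finset.univ.filter (fun k => i < k),
          (c k i : ℝ) • ((2 * Jfun (σ k)) • proj' k)))
        ((Pi.single j 1 : Fin ℓ → ℝ)) =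
        (Pi.single j 1 : Fin ℓ → ℝ) + ∑ i ∈ Finset.univ.filter (fun i => i < j),
          ((c j i : ℝ) * Jfun (σ j)) • (Pi.single i 1 : Fin ℓ → ℝ) := by
      funext i
      simp only [ContinuousLinearMap.pi_apply, ContinuousLinearMap.add_apply,
        ContinuousLinearMap.smul_apply, ContinuousLinearMap.coe_sum', Finset.sum_apply,
        ContinuousLinearMap.proj_apply, Pi.add_apply, Finset.sum_apply, Pi.smul_apply,
        smul_eq_mul]
      have hsingle : ∀ k : Fin ℓ, (Pi.single j 1 : Fin ℓ → ℝ) k = if k = j then 1 else 0 := by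
        intro k
        rw [Pi.single_apply]
      rw [hsingle i]
      have h1 : ∑ k ∈ Finset.univ.filter (fun k => i < k),
          (c k i : ℝ) * ((2 * Jfun (σ k)) * (Pi.single j 1 : Fin ℓ → ℝ) k) =
          if i < j then (c j i : ℝ) * (2 * Jfun (σ j)) else 0 := by
        rw [Finset.sum_congr rfl (fun k _ => by
          rw [hsingle k, mul_ite, mul_ite, mul_one, mul_zero, mul_zero])]
        rw [Finset.sum_ite_eq' (Finset.univ.filter (fun k => i < k)) j
          (fun k => (c k i : ℝ) * (2 * Jfun (σ k)))]
        simp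
      rw [h1]
      have h2 : ∑ i' ∈ Finset.univ.filter (fun i' => i' < j),
          ((c j i' : ℝ) * Jfun (σ j)) * (Pi.single i' 1 : Fin ℓ → ℝ) i =
          if i < j then (c j i : ℝ) * Jfun (σ j) else 0 := by
        rw [Finset.sum_congr rfl (fun i' _ => by
          rw [Pi.single_apply, mul_ite, mul_one, mul_zero])]
        rw [Finset.sum_ite_eq (Finset.univ.filter (fun i' => i' < j)) i
          (fun i' => (c j i' : ℝ) * Jfun (σ j))]
        simp
      rw [h2]
      split_ifs <;> ring
    have hD : ∀ i : Fin ℓ, fderiv ℝ (Klam l c) τ (Pi.single i 1) = 2 * Jact l c i τ := by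
      intro i
      simp only [Jact]
      ring
    have hev := congrArg (fun T : (Fin ℓ → ℝ) →L[ℝ] ℝ => T (Pi.single j 1)) hchain
    simp only [ContinuousLinearMap.comp_apply] at hev
    rw [hPhifd, hw] at hev
    rw [map_add, map_sum] at hev
    have hlhs : fderiv ℝ (Klam l c) τ (Pi.single j 1) +
        ∑ i ∈ Finset.univ.filter (fun i => i < j),
          fderiv ℝ (Klam l c) τ (((c j i : ℝ) * Jfun (σ j)) • (Pi.single i 1 : Fin ℓ → ℝ)) =
        2 * Jact l c j τ + 2 * Jfun (σ j) * Lfun l c j τ := by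
      rw [hD j]
      rw [Finset.sum_congr rfl (fun i _ => by rw [map_smul, hD i, smul_eq_mul])]
      rw [Lfun, Finset.mul_sum]
      congr 1
      apply Finset.sum_congr rfl
      intro i _
      ring
    have hrhs : (∑ i, (l i : ℝ) • ((2 * Jfun (σ i)) • proj' i)) ((Pi.single j 1 : Fin ℓ → ℝ)) =
        (l j : ℝ) * (2 * Jfun (σ j)) := by
      simp only [ContinuousLinearMap.coe_sum', Finset.sum_apply,
        ContinuousLinearMap.smul_apply, ContinuousLinearMap.proj_apply, smul_eq_mul]
      rw [Finset.sum_congr rfl (fun i _ => by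
        rw [Pi.single_apply, mul_ite, mul_ite, mul_one, mul_zero, mul_zero])]
      rw [Finset.sum_ite_eq' Finset.univ j (fun i => (l i : ℝ) * (2 * Jfun (σ i)))]
      simp
    rw [hlhs, hrhs] at hev
    have hσj : PhiInv c τ j = σ j := by rw [hPG]
    rw [hσj]
    linarith
  refine ⟨main, ?_⟩
  intro h
  rw [main ⟨0, h⟩]
  have : Lfun l c ⟨0, h⟩ τ = 0 := by
    apply Finset.sum_eq_zero
    intro i hi
    have := (Finset.mem_filter.mp hi).2
    exact absurd this (by simp [Fin.lt_def])
  rw [this]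
  ring
end
end

section
/- Assume the positivity condition: l_j − L_j(τ) > 0 for every τ ∈ ℝ^ℓ and every j. Then the map J := (J₁, …, J_ℓ) : ℝ^ℓ → ℝ^ℓ is injective, its image is exactly the set { x ∈ ℝ^ℓ : 0 < x_j < l_j − Σ_{i<j} c_{ji} x_i for all j }, and the closure of its image is the moment polytope Δ := { x ∈ ℝ^ℓ : 0 ≤ x_j ≤ l_j − Σ_{i<j} c_{ji} x_i for all j }. -/
open Real Finset

noncomputable section

lemma one_add_exp_pos (t : ℝ) : 0 < 1 + Real.exp (2 * t) := by positivity

lemma differentiable_Kfun : Differentiable ℝ Kfun := fun t => (hasDerivAt_Kfun t).differentiableAt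

lemma Jfun_pos (t : ℝ) : 0 < Jfun t := by
  unfold Jfun; positivity

lemma Jfun_lt_one (t : ℝ) : Jfun t < 1 := by
  unfold Jfun
  rw [div_lt_one (one_add_exp_pos t)]
  linarith [Real.exp_pos (2 * t)]

lemma Jfun_injective : Function.Injective Jfun := by
  intro a b h
  unfold Jfun at h
  have ha := one_add_exp_pos a
  have hb := one_add_exp_pos b
  field_simp at h
  have : Real.exp (2 * a) = Real.exp (2 * b) := by nlinarith
  have := Real.exp_injective this
  linarith

lemma Jfun_surj {y : ℝ} (h0 : 0 < y) (h1 : y < 1) :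
    Jfun ((1 / 2) * Real.log (y / (1 - y))) = y := by
  have h2 : (0:ℝ) < 1 - y := by linarith
  have h3 : 0 < y / (1 - y) := div_pos h0 h2
  unfold Jfun
  rw [show 2 * ((1 / 2) * Real.log (y / (1 - y))) = Real.log (y / (1 - y)) by ring,
    Real.exp_log h3]
  field_simp
  ring

def Psi {ℓ : ℕ} (c : Fin ℓ → Fin ℓ → ℤ) (τ : Fin ℓ → ℝ) (i : Fin ℓ) : ℝ :=
  τ i - (1 / 2) * ∑ j ∈ (Finset.univ.filter (fun j => i < j)).attach,
    (c j.1 i : ℝ) * Kfun (Psi c τ j.1)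
termination_by ℓ - i.val
decreasing_by
  have h1 : i < j.1 := (Finset.mem_filter.mp j.2).2
  have h2 : i.val < j.1.val := h1
  have h3 := j.1.isLt
  omega

lemma Psi_eq {ℓ : ℕ} (c : Fin ℓ → Fin ℓ → ℤ) (τ : Fin ℓ → ℝ) (i : Fin ℓ) :
    Psi c τ i = τ i - (1 / 2) * ∑ j ∈ Finset.univ.filter (fun j => i < j),
      (c j i : ℝ) * Kfun (Psi c τ j) := by
  rw [Psi, ← Finset.sum_attach (Finset.univ.filter (fun j => i < j))
    (fun j => (c j i : ℝ) * Kfun (Psi c τ j))]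

lemma Phi_Psi {ℓ : ℕ} (c : Fin ℓ → Fin ℓ → ℤ) (τ : Fin ℓ → ℝ) : Phi c (Psi c τ) = τ := by
  funext i
  rw [Phi, Psi_eq]
  ring

lemma Psi_Phi {ℓ : ℕ} (c : Fin ℓ → Fin ℓ → ℤ) (σ : Fin ℓ → ℝ) : Psi c (Phi c σ) = σ := by
  have key : ∀ n (i : Fin ℓ), ℓ - i.val ≤ n → Psi c (Phi c σ) i = σ i := by
    intro n
    induction n with
    | zero => intro i hi; exact absurd hi (by have := i.isLt; omega)
    | succ n IH =>
      intro i hi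
      rw [Psi_eq, Phi]
      have hs : ∑ j ∈ Finset.univ.filter (fun j => i < j), (c j i : ℝ) * Kfun (Psi c (Phi c σ) j)
          = ∑ j ∈ Finset.univ.filter (fun j => i < j), (c j i : ℝ) * Kfun (σ j) := by
        apply Finset.sum_congr rfl
        intro j hj
        have hij : i < j := (Finset.mem_filter.mp hj).2
        have : i.val < j.val := hij
        rw [IH j (by have := j.isLt; omega)]
      rw [hs]; ring
  funext i
  exact key ℓ i (by omega)

lemma Phi_injective {ℓ : ℕ} (c : Fin ℓ → Fin ℓ → ℤ) : Function.Injective (Phi c) :=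
  Function.LeftInverse.injective (g := Psi c) (Psi_Phi c)

lemma PhiInv_eq_Psi {ℓ : ℕ} (c : Fin ℓ → Fin ℓ → ℤ) : PhiInv c = Psi c := by
  funext τ
  apply Phi_injective c
  rw [Phi_Psi]
  exact Function.invFun_eq ⟨Psi c τ, Phi_Psi c τ⟩

lemma diff_Psi {ℓ : ℕ} (c : Fin ℓ → Fin ℓ → ℤ) (i : Fin ℓ) :
    Differentiable ℝ (fun τ => Psi c τ i) := by
  have key : ∀ n (i : Fin ℓ), ℓ - i.val ≤ n → Differentiable ℝ (fun τ => Psi c τ i) := by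
    intro n
    induction n with
    | zero => intro i hi; exact absurd hi (by have := i.isLt; omega)
    | succ n IH =>
      intro i hi
      have : (fun τ => Psi c τ i) = fun τ : Fin ℓ → ℝ =>
          τ i - (1 / 2) * ∑ j ∈ Finset.univ.filter (fun j => i < j),
            (c j i : ℝ) * Kfun (Psi c τ j) := by
        funext τ; exact Psi_eq c τ i
      rw [this]
      apply Differentiable.sub (differentiable_apply i)
      apply Differentiable.const_mul
      apply Differentiable.fun_sum
      intro j hj
      have hij : i.val < j.val := (Finset.mem_filter.mp hj).2
      exact ((differentiable_Kfun.comp (IH j (by have := j.isLt; omega)))).const_mul _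
  exact key ℓ i (by omega)

-- C1 : Jact as a sum over Psi-derivatives
lemma Jact_eq_sum {ℓ : ℕ} (l : Fin ℓ → ℤ) (c : Fin ℓ → Fin ℓ → ℤ) (j : Fin ℓ) (τ : Fin ℓ → ℝ) :
    Jact l c j τ = ∑ m, (l m : ℝ) * Jfun (Psi c τ m) *
      (fderiv ℝ (fun τ' => Psi c τ' m) τ (Pi.single j 1)) := by
  have hK : Klam l c = fun τ' => ∑ m, (l m : ℝ) * Kfun (Psi c τ' m) := by
    funext τ'; simp [Klam, PhiInv_eq_Psi]
  have hF : HasFDerivAt (Klam l c)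
      (∑ m, ((l m : ℝ) * (2 * Jfun (Psi c τ m))) • fderiv ℝ (fun τ' => Psi c τ' m) τ) τ := by
    rw [hK]
    apply HasFDerivAt.fun_sum
    intro m _
    have h1 : HasFDerivAt (fun τ' => Psi c τ' m) (fderiv ℝ (fun τ' => Psi c τ' m) τ) τ :=
      (diff_Psi c m τ).hasFDerivAt
    have h2 := (hasDerivAt_Kfun (Psi c τ m)).comp_hasFDerivAt τ h1
    have h3 := h2.const_mul ((l m : ℝ))
    rw [smul_smul] at h3
    exact h3
  rw [Jact, hF.fderiv]
  simp only [ContinuousLinearMap.coe_sum', Finset.sum_apply, ContinuousLinearMap.coe_smul',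
    Pi.smul_apply, smul_eq_mul]
  rw [Finset.mul_sum]
  apply Finset.sum_congr rfl
  intro m _
  ring

-- C2 : directional derivative identity
lemma Psi_dir {ℓ : ℕ} (c : Fin ℓ → Fin ℓ → ℤ) (τ : Fin ℓ → ℝ) (j m : Fin ℓ) :
    fderiv ℝ (fun τ' => Psi c τ' m) τ
      (fun i => (Pi.single j (1:ℝ) : Fin ℓ → ℝ) i + ∑ j' ∈ Finset.univ.filter (fun j' => i < j'),
        (c j' i : ℝ) * Jfun (Psi c τ j') * (Pi.single j (1:ℝ) : Fin ℓ → ℝ) j') = (Pi.single j (1:ℝ) : Fin ℓ → ℝ) m := by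
  set σ₀ := Psi c τ with hσ₀
  set e : Fin ℓ → ℝ := Pi.single j 1 with he
  set v : Fin ℓ → ℝ := fun i => e i + ∑ j' ∈ Finset.univ.filter (fun j' => i < j'),
    (c j' i : ℝ) * Jfun (σ₀ j') * e j' with hv
  set γ : ℝ → Fin ℓ → ℝ := fun t => Phi c (σ₀ + t • e) with hγdef
  have hγ0 : γ 0 = τ := by
    rw [hγdef]; simp; rw [hσ₀, Phi_Psi]
  have hγ : HasDerivAt γ v 0 := by
    rw [hasDerivAt_pi]
    intro i
    have hcomp : (fun t => γ t i) = fun t => (σ₀ i + t * e i) + (1 / 2) *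
        ∑ j' ∈ Finset.univ.filter (fun j' => i < j'), (c j' i : ℝ) * Kfun (σ₀ j' + t * e j') := by
      funext t
      rw [hγdef]
      simp [Phi, Pi.add_apply, Pi.smul_apply, smul_eq_mul]
    rw [hcomp]
    have h1 : HasDerivAt (fun t : ℝ => σ₀ i + t * e i) (e i) 0 := by
      simpa using ((hasDerivAt_id (0:ℝ)).mul_const (e i)).const_add (σ₀ i)
    have h2 : HasDerivAt (fun t : ℝ => (1 / 2) *
        ∑ j' ∈ Finset.univ.filter (fun j' => i < j'), (c j' i : ℝ) * Kfun (σ₀ j' + t * e j'))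
        ((1 / 2) * ∑ j' ∈ Finset.univ.filter (fun j' => i < j'),
          (c j' i : ℝ) * (2 * Jfun (σ₀ j') * e j')) 0 := by
      apply HasDerivAt.const_mul
      apply HasDerivAt.fun_sum
      intro j' _
      apply HasDerivAt.const_mul
      have hin : HasDerivAt (fun t : ℝ => σ₀ j' + t * e j') (e j') 0 := by
        simpa using ((hasDerivAt_id (0:ℝ)).mul_const (e j')).const_add (σ₀ j')
      have := (hasDerivAt_Kfun (σ₀ j' + 0 * e j')).comp 0 hin
      simpa [mul_comm, Function.comp_def] using this
    have := h1.fun_add h2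
    convert this using 1
    rw [hv]
    simp only
    rw [Finset.mul_sum]
    congr 1
    apply Finset.sum_congr rfl
    intro j' _
    ring
  have hD : HasFDerivAt (fun τ' => Psi c τ' m) (fderiv ℝ (fun τ' => Psi c τ' m) τ) τ :=
    (diff_Psi c m τ).hasFDerivAt
  rw [← hγ0] at hD
  have hchain := hD.comp_hasDerivAt 0 hγ
  have hexp : (fun t => Psi c (γ t) m) = fun t => σ₀ m + t * e m := by
    funext t
    rw [hγdef]
    simp only
    rw [Psi_Phi]
    simp [Pi.add_apply, Pi.smul_apply, smul_eq_mul]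
  have hexp' : HasDerivAt (fun t => Psi c (γ t) m) (e m) 0 := by
    rw [hexp]
    simpa using ((hasDerivAt_id (0:ℝ)).mul_const (e m)).const_add (σ₀ m)
  have heq : (fun t => Psi c (γ t) m) = (fun τ' => Psi c τ' m) ∘ γ := rfl
  rw [heq] at hexp'
  rw [hγ0] at hchain
  exact hchain.unique hexp'

-- C4 : the key formula
lemma Jact_formula {ℓ : ℕ} (l : Fin ℓ → ℤ) (c : Fin ℓ → Fin ℓ → ℤ) (j : Fin ℓ) (τ : Fin ℓ → ℝ) :
    Jact l c j τ = ((l j : ℝ) - Lfun l c j τ) * Jfun (Psi c τ j) := by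
  set σ₀ := Psi c τ with hσ₀
  set D : Fin ℓ → (Fin ℓ → ℝ) →L[ℝ] ℝ := fun m => fderiv ℝ (fun τ' => Psi c τ' m) τ with hD
  have hC1 : ∀ i, Jact l c i τ = ∑ m, (l m : ℝ) * Jfun (σ₀ m) * D m (Pi.single i 1) :=
    fun i => Jact_eq_sum l c i τ
  set e : Fin ℓ → ℝ := Pi.single j 1 with he
  set v : Fin ℓ → ℝ := fun i => e i + ∑ j' ∈ Finset.univ.filter (fun j' => i < j'),
    (c j' i : ℝ) * Jfun (σ₀ j') * e j' with hv
  have hC2 : ∀ m, D m v = e m := fun m => Psi_dir c τ j m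
  have hdec : v = e + ∑ i' ∈ Finset.univ.filter (fun i' => i' < j),
      ((c j i' : ℝ) * Jfun (σ₀ j)) • (Pi.single i' (1:ℝ) : Fin ℓ → ℝ) := by
    funext i
    rw [hv]
    simp only [Pi.add_apply, Finset.sum_apply, Pi.smul_apply, smul_eq_mul, he, Pi.single_apply]
    congr 1
    rw [Finset.sum_congr rfl (fun j' _ => show (c j' i : ℝ) * Jfun (σ₀ j') *
        (if j' = j then (1:ℝ) else 0) = if j' = j then (c j' i : ℝ) * Jfun (σ₀ j') else 0
      from by split <;> simp_all),
      Finset.sum_ite_eq' (Finset.univ.filter (fun j' => i < j')) j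
        (fun j' => (c j' i : ℝ) * Jfun (σ₀ j')),
      Finset.sum_congr rfl (fun i' _ => show (c j i' : ℝ) * Jfun (σ₀ j) *
        (if i = i' then (1:ℝ) else 0) = if i = i' then (c j i' : ℝ) * Jfun (σ₀ j) else 0
      from by split <;> simp_all),
      Finset.sum_ite_eq (Finset.univ.filter (fun i' => i' < j)) i
        (fun i' => (c j i' : ℝ) * Jfun (σ₀ j))]
    by_cases h : i < j <;> simp [h]
  have hDm : ∀ m, D m v = D m e + ∑ i' ∈ Finset.univ.filter (fun i' => i' < j),
      ((c j i' : ℝ) * Jfun (σ₀ j)) * D m (Pi.single i' 1) := by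
    intro m
    rw [hdec, map_add, map_sum]
    congr 1
    exact Finset.sum_congr rfl (fun i' _ => by rw [map_smul, smul_eq_mul])
  have hS : ∑ m, (l m : ℝ) * Jfun (σ₀ m) * D m v = (l j : ℝ) * Jfun (σ₀ j) := by
    simp only [hC2, he, Pi.single_apply, mul_ite, mul_one, mul_zero]
    rw [Finset.sum_ite_eq' Finset.univ j (fun m => (l m : ℝ) * Jfun (σ₀ m))]
    simp
  have key : (l j : ℝ) * Jfun (σ₀ j) = Jact l c j τ + Jfun (σ₀ j) * Lfun l c j τ := by
    rw [← hS]
    calc ∑ m, (l m : ℝ) * Jfun (σ₀ m) * D m v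
        = ∑ m, ((l m : ℝ) * Jfun (σ₀ m) * D m e +
            ∑ i' ∈ Finset.univ.filter (fun i' => i' < j),
              (l m : ℝ) * Jfun (σ₀ m) * (((c j i' : ℝ) * Jfun (σ₀ j)) * D m (Pi.single i' 1))) := by
          exact Finset.sum_congr rfl (fun m _ => by rw [hDm m, mul_add, Finset.mul_sum])
      _ = (∑ m, (l m : ℝ) * Jfun (σ₀ m) * D m e) +
            ∑ m, ∑ i' ∈ Finset.univ.filter (fun i' => i' < j),
              (l m : ℝ) * Jfun (σ₀ m) * (((c j i' : ℝ) * Jfun (σ₀ j)) * D m (Pi.single i' 1)) :=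
          Finset.sum_add_distrib
      _ = Jact l c j τ + ∑ i' ∈ Finset.univ.filter (fun i' => i' < j),
            ∑ m, (l m : ℝ) * Jfun (σ₀ m) * (((c j i' : ℝ) * Jfun (σ₀ j)) * D m (Pi.single i' 1)) := by
          rw [← hC1 j, Finset.sum_comm]
      _ = Jact l c j τ + ∑ i' ∈ Finset.univ.filter (fun i' => i' < j),
            (c j i' : ℝ) * Jfun (σ₀ j) * Jact l c i' τ := by
          congr 1
          refine Finset.sum_congr rfl (fun i' _ => ?_)
          rw [hC1 i', Finset.mul_sum]
          exact Finset.sum_congr rfl (fun m _ => by ring)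
      _ = Jact l c j τ + Jfun (σ₀ j) * Lfun l c j τ := by
          rw [Lfun, Finset.mul_sum]
          congr 1
          exact Finset.sum_congr rfl (fun i' _ => by ring)
  have h2 : Jact l c j τ = (l j : ℝ) * Jfun (σ₀ j) - Jfun (σ₀ j) * Lfun l c j τ := by linarith
  rw [h2]; ring

/-- Theorem 6.1 (the moment polytope): under the positivity condition, the map
`J = (J₁,…,J_ℓ)` is injective, its image is the open 'cubic polytope'
`{x : 0 < x_j < l_j − Σ_{i<j} c_{ji} x_i}`, and the closure of its image is the
moment polytope `Δ = {x : 0 ≤ x_j ≤ l_j − Σ_{i<j} c_{ji} x_i}`. -/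
theorem action_map_range_is_polytope {ℓ : ℕ} (l : Fin ℓ → ℤ)
    (c : Fin ℓ → Fin ℓ → ℤ) (hl : ∀ j, l j ≠ 0)
    (hpos : ∀ τ : Fin ℓ → ℝ, ∀ j : Fin ℓ, 0 < (l j : ℝ) - Lfun l c j τ) :
    Function.Injective (fun τ : Fin ℓ → ℝ => fun j : Fin ℓ => Jact l c j τ) ∧
    Set.range (fun τ : Fin ℓ → ℝ => fun j : Fin ℓ => Jact l c j τ) =
      {x : Fin ℓ → ℝ | ∀ j : Fin ℓ, 0 < x j ∧ x j < (l j : ℝ) -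
        ∑ i ∈ Finset.univ.filter (fun i => i < j), (c j i : ℝ) * x i} ∧
    closure (Set.range (fun τ : Fin ℓ → ℝ => fun j : Fin ℓ => Jact l c j τ)) =
      {x : Fin ℓ → ℝ | ∀ j : Fin ℓ, 0 ≤ x j ∧ x j ≤ (l j : ℝ) -
        ∑ i ∈ Finset.univ.filter (fun i => i < j), (c j i : ℝ) * x i} := by
  -- range = open polytope
  have hrange : Set.range (fun τ : Fin ℓ → ℝ => fun j : Fin ℓ => Jact l c j τ) =
      {x : Fin ℓ → ℝ | ∀ j : Fin ℓ, 0 < x j ∧ x j < (l j : ℝ) -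
        ∑ i ∈ Finset.univ.filter (fun i => i < j), (c j i : ℝ) * x i} := by
    ext x
    constructor
    · rintro ⟨τ, rfl⟩ j
      have hLx : ∑ i ∈ Finset.univ.filter (fun i => i < j), (c j i : ℝ) * Jact l c i τ
          = Lfun l c j τ := rfl
      simp only [Set.mem_setOf_eq, hLx]
      constructor
      · rw [Jact_formula]
        exact mul_pos (hpos τ j) (Jfun_pos _)
      · calc Jact l c j τ = ((l j : ℝ) - Lfun l c j τ) * Jfun (Psi c τ j) := Jact_formula l c j τ
          _ < ((l j : ℝ) - Lfun l c j τ) * 1 := by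
              exact mul_lt_mul_of_pos_left (Jfun_lt_one _) (hpos τ j)
          _ = (l j : ℝ) - Lfun l c j τ := mul_one _
    · intro hx
      set d : Fin ℓ → ℝ := fun j => (l j : ℝ) -
        ∑ i ∈ Finset.univ.filter (fun i => i < j), (c j i : ℝ) * x i with hd
      have hd0 : ∀ j, 0 < d j := fun j => lt_trans (hx j).1 (hx j).2
      have hy0 : ∀ j, 0 < x j / d j := fun j => div_pos (hx j).1 (hd0 j)
      have hy1 : ∀ j, x j / d j < 1 := fun j => (div_lt_one (hd0 j)).2 (hx j).2
      set σ : Fin ℓ → ℝ := fun j => (1 / 2) * Real.log ((x j / d j) / (1 - x j / d j)) with hσ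
      have hJσ : ∀ j, Jfun (σ j) = x j / d j := fun j => Jfun_surj (hy0 j) (hy1 j)
      set τ : Fin ℓ → ℝ := Phi c σ with hτ
      have hPsiτ : Psi c τ = σ := Psi_Phi c σ
      have main : ∀ n : ℕ, ∀ j : Fin ℓ, j.val < n → Jact l c j τ = x j := by
        intro n
        induction n with
        | zero => intro j hj; omega
        | succ n IH =>
          intro j hj
          have hLτ : Lfun l c j τ = ∑ i ∈ Finset.univ.filter (fun i => i < j),
              (c j i : ℝ) * x i := by
            apply Finset.sum_congr rfl
            intro i hi
            have : i.val < j.val := (Finset.mem_filter.mp hi).2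
            rw [IH i (by omega)]
          rw [Jact_formula, hLτ, hPsiτ, hJσ]
          have : (l j : ℝ) - ∑ i ∈ Finset.univ.filter (fun i => i < j), (c j i : ℝ) * x i
              = d j := rfl
          rw [this]
          rw [← mul_div_assoc]
          exact mul_div_cancel_left₀ (x j) (ne_of_gt (hd0 j))
      exact ⟨τ, funext fun j => main ℓ j j.isLt⟩
  -- injectivity
  have hinj : Function.Injective (fun τ : Fin ℓ → ℝ => fun j : Fin ℓ => Jact l c j τ) := by
    intro τ τ' h
    have hJ : ∀ j, Jact l c j τ = Jact l c j τ' := fun j => congrFun h j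
    have hL : ∀ j, Lfun l c j τ = Lfun l c j τ' := by
      intro j
      exact Finset.sum_congr rfl fun i _ => by rw [hJ i]
    have hPsi : Psi c τ = Psi c τ' := by
      funext j
      apply Jfun_injective
      have h1 := Jact_formula l c j τ
      have h2 := Jact_formula l c j τ'
      rw [hJ j, h2, hL j] at h1
      exact (mul_left_cancel₀ (ne_of_gt (hpos τ' j)) h1.symm)
    rw [← Phi_Psi c τ, ← Phi_Psi c τ', hPsi]
  refine ⟨hinj, hrange, ?_⟩
  -- closure
  set O := {x : Fin ℓ → ℝ | ∀ j : Fin ℓ, 0 < x j ∧ x j < (l j : ℝ) -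
    ∑ i ∈ Finset.univ.filter (fun i => i < j), (c j i : ℝ) * x i} with hO
  set Δ := {x : Fin ℓ → ℝ | ∀ j : Fin ℓ, 0 ≤ x j ∧ x j ≤ (l j : ℝ) -
    ∑ i ∈ Finset.univ.filter (fun i => i < j), (c j i : ℝ) * x i} with hΔ
  rw [hrange]
  have hsub : O ⊆ Δ := fun x hx j => ⟨le_of_lt (hx j).1, le_of_lt (hx j).2⟩
  have hclosed : IsClosed Δ := by
    have hΔ2 : Δ = ⋂ j, ({x : Fin ℓ → ℝ | 0 ≤ x j} ∩
        {x : Fin ℓ → ℝ | x j ≤ (l j : ℝ) -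
          ∑ i ∈ Finset.univ.filter (fun i => i < j), (c j i : ℝ) * x i}) := by
      ext x; simp [hΔ, Set.mem_iInter, forall_and]
    rw [hΔ2]
    refine isClosed_iInter fun j => IsClosed.inter ?_ ?_
    · exact isClosed_le continuous_const (continuous_apply j)
    · exact isClosed_le (continuous_apply j)
        (continuous_const.sub (continuous_finset_sum _ fun i _ =>
          continuous_const.mul (continuous_apply i)))
  apply Set.Subset.antisymm (closure_minimal hsub hclosed)
  -- Δ ⊆ closure O
  intro x hx
  set p : Fin ℓ → ℝ := fun j => Jact l c j (fun _ => 0) with hp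
  have hpO : p ∈ O := by rw [← hrange]; exact ⟨fun _ => 0, rfl⟩
  set z : ℕ → Fin ℓ → ℝ := fun n j => x j + ((n : ℝ) + 1)⁻¹ * (p j - x j) with hz
  have hzO : ∀ n, z n ∈ O := by
    intro n
    set a : ℝ := ((n : ℝ) + 1)⁻¹ with ha
    have ha0 : 0 < a := by positivity
    have ha1 : a ≤ 1 := by
      rw [ha]
      rw [inv_le_one_iff₀]
      right; push_cast; linarith [Nat.cast_nonneg (α := ℝ) n]
    intro j
    have hxj := hx j
    have hpj := hpO j
    have hsum : ∑ i ∈ Finset.univ.filter (fun i => i < j), (c j i : ℝ) * z n i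
        = (1 - a) * (∑ i ∈ Finset.univ.filter (fun i => i < j), (c j i : ℝ) * x i)
          + a * (∑ i ∈ Finset.univ.filter (fun i => i < j), (c j i : ℝ) * p i) := by
      rw [Finset.mul_sum, Finset.mul_sum, ← Finset.sum_add_distrib]
      exact Finset.sum_congr rfl fun i _ => by rw [hz]; ring
    constructor
    · have : z n j = (1 - a) * x j + a * p j := by rw [hz]; ring
      rw [this]
      have h1 : 0 ≤ (1 - a) * x j := mul_nonneg (by linarith) hxj.1
      have h2 : 0 < a * p j := mul_pos ha0 hpj.1
      linarith
    · rw [hsum]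
      have : z n j = (1 - a) * x j + a * p j := by rw [hz]; ring
      rw [this]
      nlinarith [hxj.2, hpj.2]
  have htend : Filter.Tendsto z Filter.atTop (nhds x) := by
    rw [tendsto_pi_nhds]
    intro j
    have h1 : Filter.Tendsto (fun n : ℕ => ((n : ℝ) + 1)⁻¹) Filter.atTop (nhds 0) :=
      tendsto_one_div_add_atTop_nhds_zero_nat.congr (by intro n; rw [one_div])
    have h2 : Filter.Tendsto (fun n : ℕ => x j + ((n : ℝ) + 1)⁻¹ * (p j - x j))
        Filter.atTop (nhds (x j + 0 * (p j - x j))) :=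
      Filter.Tendsto.const_add _ (h1.mul_const _)
    simpa using h2
  exact mem_closure_of_tendsto htend (Filter.Eventually.of_forall hzO)
end
end
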